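/- Let S := {(x,y) ∈ ℝ² : (4x² − y²)(4y² − x²) ≥ 0 and y ≥ 0}. Then S is path-connected, but there is no map α : ℝ → ℝ² that is real-analytic on the interval [0,1] with α(0) = (−1,1), α(1) = (1,1) and α([0,1]) ⊆ S; in particular, S is not connected by analytic paths. -/

import Mathlib

open Filter Set Topology

private lemma order_lt_aux {u v : ℝ → ℝ} {t₀ : ℝ} {k m : ℕ}
    (hu : ContinuousAt u t₀) (hv : ContinuousAt v t₀) (hu0 : u t₀ ≠ 0) (hkm : k < m)
    (h : ∀ᶠ s in 𝓝 t₀, ((s - t₀) ^ k * u s) ^ 2 ≤ 4 * ((s - t₀) ^ m * v s) ^ 2) : False := by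
  have h2 : ∀ᶠ s in 𝓝[≠] t₀, (u s) ^ 2 ≤ 4 * ((s - t₀) ^ (m - k) * v s) ^ 2 := by
    filter_upwards [h.filter_mono nhdsWithin_le_nhds, self_mem_nhdsWithin] with s hs hsne
    have hne : s - t₀ ≠ 0 := sub_ne_zero.mpr hsne
    have hpos : (0:ℝ) < ((s - t₀) ^ k) ^ 2 := by positivity
    have hss : (s - t₀) ^ m = (s - t₀) ^ k * (s - t₀) ^ (m - k) := by
      rw [← pow_add]; congr 1; omega
    rw [hss] at hs
    nlinarith [hs, hpos]
  have hL : Tendsto (fun s => (u s) ^ 2) (𝓝[≠] t₀) (𝓝 ((u t₀) ^ 2)) :=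
    (hu.pow 2).tendsto.mono_left nhdsWithin_le_nhds
  have hRc : ContinuousAt (fun s => 4 * ((s - t₀) ^ (m - k) * v s) ^ 2) t₀ := by
    exact continuousAt_const.mul ((((continuousAt_id.sub continuousAt_const).pow (m - k)).mul hv).pow 2)
  have hval : 4 * ((t₀ - t₀) ^ (m - k) * v t₀) ^ 2 = 0 := by
    rw [sub_self, zero_pow (by omega : m - k ≠ 0)]; ring
  have hR : Tendsto (fun s => 4 * ((s - t₀) ^ (m - k) * v s) ^ 2) (𝓝[≠] t₀) (𝓝 0) := by
    have := hRc.tendsto.mono_left (nhdsWithin_le_nhds (s := {t₀}ᶜ))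
    rwa [hval] at this
  have : (u t₀) ^ 2 ≤ 0 := le_of_tendsto_of_tendsto hL hR h2
  nlinarith [pow_two_pos_of_ne_zero hu0, this]

private lemma even_of_nonneg {g v : ℝ → ℝ} {t₀ : ℝ} {m : ℕ}
    (hv : ContinuousAt v t₀) (hv0 : v t₀ ≠ 0)
    (heq : ∀ᶠ s in 𝓝 t₀, g s = (s - t₀) ^ m * v s)
    (hnn : ∀ᶠ s in 𝓝 t₀, 0 ≤ g s) : Even m ∧ 0 < v t₀ := by
  have hvpos : 0 < v t₀ := by
    rcases hv0.lt_or_gt with hneg | hpos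
    · exfalso
      have hev : ∀ᶠ s in 𝓝 t₀, v s < 0 := hv.tendsto.eventually_lt_const hneg
      have hE : ∀ᶠ s in 𝓝[>] t₀, ((g s = (s - t₀) ^ m * v s ∧ 0 ≤ g s) ∧ v s < 0) ∧ s ∈ Ioi t₀ :=
        (((heq.and hnn).and hev).filter_mono nhdsWithin_le_nhds).and self_mem_nhdsWithin
      obtain ⟨s, ⟨⟨h1, h2⟩, h3⟩, h4⟩ := hE.exists
      have hgt : (0:ℝ) < s - t₀ := sub_pos.mpr h4
      nlinarith [pow_pos hgt m, h1, h2, h3]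
    · exact hpos
  refine ⟨?_, hvpos⟩
  by_contra hodd
  rw [← Nat.not_odd_iff_even, not_not] at hodd
  have hev : ∀ᶠ s in 𝓝 t₀, 0 < v s := hv.tendsto.eventually_const_lt hvpos
  have hE : ∀ᶠ s in 𝓝[<] t₀, ((g s = (s - t₀) ^ m * v s ∧ 0 ≤ g s) ∧ 0 < v s) ∧ s ∈ Iio t₀ :=
    (((heq.and hnn).and hev).filter_mono nhdsWithin_le_nhds).and self_mem_nhdsWithin
  obtain ⟨s, ⟨⟨h1, h2⟩, h3⟩, h4⟩ := hE.exists
  have hlt : s - t₀ < 0 := sub_neg.mpr h4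
  have := hodd.pow_neg hlt
  nlinarith [h1, h2, h3, this]

private lemma no_analytic_path :
    ¬ ∃ α : ℝ → ℝ × ℝ,
        AnalyticOnNhd ℝ α (Set.Icc (0:ℝ) 1) ∧ α 0 = (-1, 1) ∧ α 1 = (1, 1) ∧
        α '' Set.Icc (0:ℝ) 1 ⊆
          {p : ℝ × ℝ | (4*p.1^2 - p.2^2) * (4*p.2^2 - p.1^2) ≥ 0 ∧ p.2 ≥ 0} := by
  rintro ⟨α, hα, h0, h1, hsub⟩
  set x : ℝ → ℝ := fun t => (α t).1 with hxdef
  set y : ℝ → ℝ := fun t => (α t).2 with hydef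
  have hx : AnalyticOnNhd ℝ x (Icc 0 1) := fun t ht =>
    ((ContinuousLinearMap.fst ℝ ℝ ℝ).analyticAt _).comp (hα t ht)
  have hy : AnalyticOnNhd ℝ y (Icc 0 1) := fun t ht =>
    ((ContinuousLinearMap.snd ℝ ℝ ℝ).analyticAt _).comp (hα t ht)
  have hx0 : x 0 = -1 := by simp only [hxdef]; rw [h0]
  have hx1 : x 1 = 1 := by simp only [hxdef]; rw [h1]
  have hy0 : y 0 = 1 := by simp only [hydef]; rw [h0]
  have hmem : ∀ t ∈ Icc (0:ℝ) 1,
      (4*(x t)^2 - (y t)^2) * (4*(y t)^2 - (x t)^2) ≥ 0 ∧ y t ≥ 0 :=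
    fun t ht => hsub ⟨t, ht, rfl⟩
  have hkey : ∀ t ∈ Icc (0:ℝ) 1, (x t)^2 ≤ 4*(y t)^2 ∧ (y t)^2 ≤ 4*(x t)^2 := by
    intro t ht
    obtain ⟨h, hy'⟩ := hmem t ht
    constructor <;>
      nlinarith [sq_nonneg (x t), sq_nonneg (y t), sq_nonneg (x t * y t),
        sq_nonneg (x t - y t), sq_nonneg (x t + y t)]
  set B : Set ℝ := {t | t ∈ Icc (0:ℝ) 1 ∧ x t < 0} with hBdef
  have hB0 : (0:ℝ) ∈ B := ⟨⟨le_refl 0, zero_le_one⟩, by rw [hx0]; norm_num⟩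
  have hBne : B.Nonempty := ⟨0, hB0⟩
  have hBbdd : BddAbove B := ⟨1, fun t ht => ht.1.2⟩
  set t₀ := sSup B with ht₀def
  have ht₀mem : t₀ ∈ Icc (0:ℝ) 1 := ⟨le_csSup hBbdd hB0, csSup_le hBne fun t ht => ht.1.2⟩
  have hxc : ContinuousOn x (Icc 0 1) := hx.continuousOn
  have ht₀cl : t₀ ∈ closure B := csSup_mem_closure hBne hBbdd
  have hC : IsClosed (Icc (0:ℝ) 1 ∩ x ⁻¹' (Iic 0)) :=
    hxc.preimage_isClosed_of_isClosed isClosed_Icc isClosed_Iic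
  have hxt₀le : x t₀ ≤ 0 := by
    have hsubC : B ⊆ Icc (0:ℝ) 1 ∩ x ⁻¹' (Iic 0) := fun t ht => ⟨ht.1, le_of_lt ht.2⟩
    exact (closure_minimal hsubC hC ht₀cl).2
  have hxr : ∀ t, t₀ < t → t ≤ 1 → 0 ≤ x t := by
    intro t h₁ h₂
    by_contra h
    push_neg at h
    have htB : t ∈ B := ⟨⟨le_trans ht₀mem.1 (le_of_lt h₁), h₂⟩, h⟩
    exact absurd (le_csSup hBbdd htB) (not_le.mpr h₁)
  have ht₀lt1 : t₀ < 1 := by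
    rcases lt_or_eq_of_le ht₀mem.2 with h | h
    · exact h
    · rw [h, hx1] at hxt₀le; linarith
  have hxct₀ : ContinuousAt x t₀ := (hx t₀ ht₀mem).continuousAt
  have hxt₀ge : 0 ≤ x t₀ := by
    have hev : ∀ᶠ s in 𝓝[>] t₀, 0 ≤ x s := by
      have h1' : ∀ᶠ s in 𝓝 t₀, s < 1 := eventually_lt_nhds ht₀lt1
      filter_upwards [h1'.filter_mono nhdsWithin_le_nhds, self_mem_nhdsWithin] with s hs1 hs2
      exact hxr s hs2 (le_of_lt hs1)
    exact ge_of_tendsto (hxct₀.tendsto.mono_left nhdsWithin_le_nhds) hev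
  have hxt₀ : x t₀ = 0 := le_antisymm hxt₀le hxt₀ge
  have ht₀pos : 0 < t₀ := by
    rcases lt_or_eq_of_le ht₀mem.1 with h | h
    · exact h
    · rw [← h, hx0] at hxt₀; norm_num at hxt₀
  have hIccnhds : Icc (0:ℝ) 1 ∈ 𝓝 t₀ := Icc_mem_nhds ht₀pos ht₀lt1
  have hyt₀ : y t₀ = 0 := by
    have h2 := (hkey t₀ ht₀mem).2
    have h3 := (hmem t₀ ht₀mem).2
    nlinarith [sq_nonneg (y t₀)]
  have hxne : ¬ ∀ᶠ s in 𝓝 t₀, x s = 0 := by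
    intro h
    have heq : x =ᶠ[𝓝 t₀] 0 := h.mono fun s hs => by simpa using hs
    have := hx.eqOn_zero_of_preconnected_of_eventuallyEq_zero isPreconnected_Icc ht₀mem heq
      (left_mem_Icc.mpr zero_le_one)
    rw [hx0] at this; norm_num at this
  have hyne : ¬ ∀ᶠ s in 𝓝 t₀, y s = 0 := by
    intro h
    have heq : y =ᶠ[𝓝 t₀] 0 := h.mono fun s hs => by simpa using hs
    have := hy.eqOn_zero_of_preconnected_of_eventuallyEq_zero isPreconnected_Icc ht₀mem heq
      (left_mem_Icc.mpr zero_le_one)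
    rw [hy0] at this; norm_num at this
  obtain ⟨k, u, hu, hu0, hxeq⟩ :=
    (hx t₀ ht₀mem).exists_eventuallyEq_pow_smul_nonzero_iff.mpr hxne
  obtain ⟨m, v, hv, hv0, hyeq⟩ :=
    (hy t₀ ht₀mem).exists_eventuallyEq_pow_smul_nonzero_iff.mpr hyne
  have hxeq' : ∀ᶠ s in 𝓝 t₀, x s = (s - t₀) ^ k * u s :=
    hxeq.mono fun s hs => by rw [hs, smul_eq_mul]
  have hyeq' : ∀ᶠ s in 𝓝 t₀, y s = (s - t₀) ^ m * v s :=
    hyeq.mono fun s hs => by rw [hs, smul_eq_mul]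
  have hy_nn : ∀ᶠ s in 𝓝 t₀, 0 ≤ y s :=
    eventually_of_mem hIccnhds fun s hs => (hmem s hs).2
  obtain ⟨hmeven, hvpos⟩ := even_of_nonneg hv.continuousAt hv0 hyeq' hy_nn
  have hkeyev : ∀ᶠ s in 𝓝 t₀, (x s)^2 ≤ 4*(y s)^2 ∧ (y s)^2 ≤ 4*(x s)^2 :=
    eventually_of_mem hIccnhds fun s hs => hkey s hs
  have hcomp1 : ∀ᶠ s in 𝓝 t₀, ((s - t₀) ^ k * u s) ^ 2 ≤ 4 * ((s - t₀) ^ m * v s) ^ 2 := by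
    filter_upwards [hxeq', hyeq', hkeyev] with s e1 e2 e3
    rw [← e1, ← e2]; exact e3.1
  have hcomp2 : ∀ᶠ s in 𝓝 t₀, ((s - t₀) ^ m * v s) ^ 2 ≤ 4 * ((s - t₀) ^ k * u s) ^ 2 := by
    filter_upwards [hxeq', hyeq', hkeyev] with s e1 e2 e3
    rw [← e1, ← e2]; exact e3.2
  have hkm : k = m := by
    rcases lt_trichotomy k m with h | h | h
    · exact absurd (order_lt_aux hu.continuousAt hv.continuousAt hu0 h hcomp1) id
    · exact h
    · exact absurd (order_lt_aux hv.continuousAt hu.continuousAt hv0 h hcomp2) id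
  have hkeven : Even k := hkm ▸ hmeven
  rcases hu0.lt_or_gt with hneg | hpos
  · -- u t₀ < 0 : x negative just to the right of t₀
    have hev : ∀ᶠ s in 𝓝 t₀, u s < 0 := hu.continuousAt.tendsto.eventually_lt_const hneg
    have hE : ∀ᶠ s in 𝓝[>] t₀, ((x s = (s - t₀) ^ k * u s ∧ u s < 0) ∧ s < 1) ∧ s ∈ Ioi t₀ :=
      (((hxeq'.and hev).and (eventually_lt_nhds ht₀lt1)).filter_mono
        nhdsWithin_le_nhds).and self_mem_nhdsWithin
    obtain ⟨s, ⟨⟨e1, e2⟩, e3⟩, e4⟩ := hE.exists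
    have h5 := hxr s e4 (le_of_lt e3)
    have h6 : (0:ℝ) < (s - t₀) ^ k := pow_pos (sub_pos.mpr e4) k
    nlinarith [e1, e2, h5, h6]
  · -- u t₀ > 0 : x positive on punctured neighborhood, but B points accumulate at t₀
    have hfreq : ∃ᶠ s in 𝓝 t₀, s ∈ B := mem_closure_iff_frequently.mp ht₀cl
    have hev : ∀ᶠ s in 𝓝 t₀, 0 < u s ∧ x s = (s - t₀) ^ k * u s :=
      (hu.continuousAt.tendsto.eventually_const_lt hpos).and hxeq'
    obtain ⟨s, hsB, hupos, heqs⟩ := (hfreq.and_eventually hev).exists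
    have hxneg : x s < 0 := hsB.2
    have h6 : (0:ℝ) ≤ (s - t₀) ^ k := hkeven.pow_nonneg (s - t₀)
    nlinarith [heqs, hupos, hxneg, h6]


private lemma Spath :
    IsPathConnected {p : ℝ × ℝ | (4*p.1^2 - p.2^2) * (4*p.2^2 - p.1^2) ≥ 0 ∧ p.2 ≥ 0} := by
  refine ⟨(0, 0), by norm_num, ?_⟩
  intro q hq
  refine ⟨⟨⟨fun t => (t : ℝ) • q, ?_⟩, ?_, ?_⟩, ?_⟩
  · exact (continuous_subtype_val.smul continuous_const)
  · simp; rfl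
  · simp
  · intro t
    obtain ⟨h1, h2⟩ := hq
    have ht : (0:ℝ) ≤ (t : ℝ) := t.2.1
    constructor
    · show (4*((t:ℝ) • q).1^2 - ((t:ℝ) • q).2^2) * (4*((t:ℝ) • q).2^2 - ((t:ℝ) • q).1^2) ≥ 0
      simp only [Prod.smul_fst, Prod.smul_snd, smul_eq_mul]
      have he : (4*((t:ℝ) * q.1)^2 - ((t:ℝ) * q.2)^2) * (4*((t:ℝ) * q.2)^2 - ((t:ℝ) * q.1)^2)
          = (t:ℝ)^4 * ((4*q.1^2 - q.2^2) * (4*q.2^2 - q.1^2)) := by ring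
      rw [he]
      positivity
    · show ((t:ℝ) • q).2 ≥ 0
      simp only [Prod.smul_snd, smul_eq_mul]
      positivity



/-- A set `S` is *connected by analytic paths* if for every `p, q ∈ S` there is a map
`α : ℝ → E` that is real-analytic on `[0,1]` with `α 0 = p`, `α 1 = q` and
`α '' [0,1] ⊆ S`. -/
def ConnectedByAnalyticPaths {E : Type*} [NormedAddCommGroup E] [NormedSpace ℝ E]
    (S : Set E) : Prop :=
  ∀ p ∈ S, ∀ q ∈ S, ∃ α : ℝ → E,
    AnalyticOnNhd ℝ α (Set.Icc (0:ℝ) 1) ∧ α 0 = p ∧ α 1 = q ∧ α '' Set.Icc (0:ℝ) 1 ⊆ S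

/-- The semialgebraic set `S := {(x,y) : (4x² − y²)(4y² − x²) ≥ 0, y ≥ 0}` is
path-connected but there is no analytic path inside `S` joining `(−1,1)` to `(1,1)`;
in particular `S` is not connected by analytic paths. -/
theorem pathConnected_not_connectedByAnalyticPaths :
    IsPathConnected {p : ℝ × ℝ | (4*p.1^2 - p.2^2) * (4*p.2^2 - p.1^2) ≥ 0 ∧ p.2 ≥ 0} ∧
    (¬ ∃ α : ℝ → ℝ × ℝ,
        AnalyticOnNhd ℝ α (Set.Icc (0:ℝ) 1) ∧ α 0 = (-1, 1) ∧ α 1 = (1, 1) ∧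
        α '' Set.Icc (0:ℝ) 1 ⊆
          {p : ℝ × ℝ | (4*p.1^2 - p.2^2) * (4*p.2^2 - p.1^2) ≥ 0 ∧ p.2 ≥ 0}) ∧
    ¬ ConnectedByAnalyticPaths
        {p : ℝ × ℝ | (4*p.1^2 - p.2^2) * (4*p.2^2 - p.1^2) ≥ 0 ∧ p.2 ≥ 0} := by
  refine ⟨Spath, no_analytic_path, ?_⟩
  intro h
  have h1 : ((-1:ℝ), (1:ℝ)) ∈
      {p : ℝ × ℝ | (4*p.1^2 - p.2^2) * (4*p.2^2 - p.1^2) ≥ 0 ∧ p.2 ≥ 0} := by norm_num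
  have h2 : ((1:ℝ), (1:ℝ)) ∈
      {p : ℝ × ℝ | (4*p.1^2 - p.2^2) * (4*p.2^2 - p.1^2) ≥ 0 ∧ p.2 ≥ 0} := by norm_num
  exact no_analytic_path (h _ h1 _ h2)
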